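/- Monotonicity of the minimal interpolation degree: If S' ⊆ S are finite sets of points in ℝ^s, then μ(S') ≤ μ(S). -/

import Mathlib

open Finset
open scoped Classical

set_option maxHeartbeats 1000000
set_option synthInstance.maxHeartbeats 1000000

noncomputable section

/-- `L` is an interpolation space with respect to `S ⊆ ℝ^s`. -/
def IsInterpSpace {s : ℕ} (S : Set (Fin s → ℝ)) (L : Submodule ℝ (MvPolynomial (Fin s) ℝ)) :
    Prop :=
  ∀ f : MvPolynomial (Fin s) ℝ, ∃! g : MvPolynomial (Fin s) ℝ,
    g ∈ L ∧ ∀ z ∈ S, MvPolynomial.eval z g = MvPolynomial.eval z f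

/-- `L` is a minimal degree interpolation space with respect to `S ⊆ ℝ^s`. -/
def IsMinDegInterpSpace {s : ℕ} (S : Set (Fin s → ℝ))
    (L : Submodule ℝ (MvPolynomial (Fin s) ℝ)) : Prop :=
  IsInterpSpace S L ∧
    ∀ f g : MvPolynomial (Fin s) ℝ, g ∈ L →
      (∀ z ∈ S, MvPolynomial.eval z g = MvPolynomial.eval z f) →
      g.totalDegree ≤ f.totalDegree

/-- The maximal total degree occurring in a space of polynomials. -/
def degSup {s : ℕ} (L : Submodule ℝ (MvPolynomial (Fin s) ℝ)) : ℕ :=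
  sSup (MvPolynomial.totalDegree '' (L : Set (MvPolynomial (Fin s) ℝ)))

/-- `μ(S)`: the maximal degree of a minimal degree interpolation space with respect to `S`. -/
def mu {s : ℕ} (S : Set (Fin s → ℝ)) : ℕ :=
  sSup (degSup '' {L | IsMinDegInterpSpace S L})

namespace MuMono

open MvPolynomial

variable {s : ℕ}

/-- The evaluation map at the points of `S`. -/
def evalMap (S : Set (Fin s → ℝ)) : MvPolynomial (Fin s) ℝ →ₗ[ℝ] (↥S → ℝ) :=
  LinearMap.pi fun z => (MvPolynomial.aeval (z : Fin s → ℝ)).toLinearMap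

lemma evalMap_apply (S : Set (Fin s → ℝ)) (p : MvPolynomial (Fin s) ℝ) (z : ↥S) :
    evalMap S p z = MvPolynomial.eval (z : Fin s → ℝ) p := by
  have h : (MvPolynomial.aeval (z : Fin s → ℝ)) p
      = MvPolynomial.eval (z : Fin s → ℝ) p :=
    DFunLike.congr_fun (MvPolynomial.coe_aeval_eq_eval _) p
  simpa [evalMap] using h

/-- The polynomials of total degree at most `n`. -/
abbrev V (s n : ℕ) : Submodule ℝ (MvPolynomial (Fin s) ℝ) :=
  MvPolynomial.restrictTotalDegree (Fin s) ℝ n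

lemma V_mono {a b : ℕ} (h : a ≤ b) : V s a ≤ V s b := fun p hp =>
  (MvPolynomial.mem_restrictTotalDegree _ _ _).mpr
    (le_trans ((MvPolynomial.mem_restrictTotalDegree _ _ _).mp hp) h)

/-- The image of polynomials of degree at most `n` under evaluation. -/
def F (S : Set (Fin s → ℝ)) (n : ℕ) : Submodule ℝ (↥S → ℝ) :=
  (V s n).map (evalMap S)

lemma F_mono (S : Set (Fin s → ℝ)) {a b : ℕ} (h : a ≤ b) : F S a ≤ F S b :=
  Submodule.map_mono (V_mono h)

/-- A polynomial of degree ≤ 1 separating two distinct points. -/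
lemma exists_sep {z w : Fin s → ℝ} (h : z ≠ w) :
    ∃ q : MvPolynomial (Fin s) ℝ, q.totalDegree ≤ 1 ∧
      MvPolynomial.eval z q = 1 ∧ MvPolynomial.eval w q = 0 := by
  obtain ⟨i, hi⟩ := Function.ne_iff.mp h
  set a := (z i - w i)⁻¹ with ha
  refine ⟨C a * X i + C (-(a * w i)), ?_, ?_, ?_⟩
  · refine (totalDegree_add _ _).trans (max_le ?_ ?_)
    · exact (totalDegree_mul _ _).trans (by simp [totalDegree_C, totalDegree_X])
    · rw [totalDegree_C]; omega
  · have hz : z i - w i ≠ 0 := sub_ne_zero.mpr hi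
    have h1 : a * (z i - w i) = 1 := inv_mul_cancel₀ hz
    simp only [map_add, map_mul, eval_C, eval_X]
    linear_combination h1
  · simp only [map_add, map_mul, eval_C, eval_X]
    ring

lemma exists_sep' (S : Set (Fin s → ℝ)) (z w : ↥S) :
    ∃ q : MvPolynomial (Fin s) ℝ, q.totalDegree ≤ 1 ∧
      MvPolynomial.eval (z : Fin s → ℝ) q = 1 ∧
      (w ≠ z → MvPolynomial.eval (w : Fin s → ℝ) q = 0) := by
  by_cases hw : w = z
  · exact ⟨1, by simp, by simp, fun h => absurd hw h⟩
  · obtain ⟨q, h1, h2, h3⟩ :=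
      exists_sep (show (z : Fin s → ℝ) ≠ (w : Fin s → ℝ) from
        fun hzw => hw (Subtype.ext hzw.symm))
    exact ⟨q, h1, h2, fun _ => h3⟩

/-- Indicator polynomials of degree at most `card S`. -/
lemma exists_indicator (S : Set (Fin s → ℝ)) [Fintype ↥S] (z : ↥S) :
    ∃ p : MvPolynomial (Fin s) ℝ, p.totalDegree ≤ Fintype.card ↥S ∧
      ∀ w : ↥S, MvPolynomial.eval (w : Fin s → ℝ) p = if w = z then 1 else 0 := by
  choose Q hd h1 h0 using exists_sep' S z
  refine ⟨∏ w ∈ Finset.univ.erase z, Q w, ?_, ?_⟩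
  · calc (∏ w ∈ Finset.univ.erase z, Q w).totalDegree
        ≤ ∑ w ∈ Finset.univ.erase z, (Q w).totalDegree := totalDegree_finset_prod _ _
      _ ≤ ∑ _w ∈ Finset.univ.erase z, 1 := Finset.sum_le_sum fun w _ => hd w
      _ = (Finset.univ.erase z).card := by simp
      _ ≤ Fintype.card ↥S := by
          simpa using (Finset.card_erase_le.trans (le_of_eq Finset.card_univ))
  · intro w
    rw [map_prod]
    by_cases hw : w = z
    · subst hw
      rw [if_pos rfl]
      exact Finset.prod_eq_one fun y hy => h1 y
    · rw [if_neg hw]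
      exact Finset.prod_eq_zero (Finset.mem_erase.mpr ⟨hw, Finset.mem_univ _⟩) (h0 w hw)

/-- Lagrange interpolation: any function on `S` is the evaluation of a polynomial of
degree at most `card S`. -/
lemma exists_eval_eq (S : Set (Fin s → ℝ)) [Fintype ↥S] (v : ↥S → ℝ) :
    ∃ p : MvPolynomial (Fin s) ℝ, p.totalDegree ≤ Fintype.card ↥S ∧
      ∀ z : ↥S, MvPolynomial.eval (z : Fin s → ℝ) p = v z := by
  choose P hd hval using exists_indicator S
  refine ⟨∑ z, C (v z) * P z, ?_, ?_⟩
  · refine (totalDegree_finset_sum _ _).trans (Finset.sup_le fun z _ => ?_)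
    exact (totalDegree_mul _ _).trans (by simpa [totalDegree_C] using hd z)
  · intro w
    rw [map_sum]
    simp only [map_mul, eval_C, hval]
    simp

lemma F_top (S : Set (Fin s → ℝ)) [Fintype ↥S] : F S (Fintype.card ↥S) = ⊤ := by
  rw [eq_top_iff]
  rintro v -
  obtain ⟨p, hd, hv⟩ := exists_eval_eq S v
  have h1 : p ∈ V s (Fintype.card ↥S) := (MvPolynomial.mem_restrictTotalDegree _ _ _).mpr hd
  have h2 : evalMap S p = v := funext fun z => (evalMap_apply S p z).trans (hv z)
  unfold F
  rw [← h2]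
  exact Submodule.mem_map_of_mem h1

/-- A linear right inverse of the evaluation map over `C`, with values in `W`. -/
lemma exists_local_section (S : Set (Fin s → ℝ)) (W : Submodule ℝ (MvPolynomial (Fin s) ℝ))
    (C : Submodule ℝ (↥S → ℝ)) (hC : C ≤ W.map (evalMap S)) :
    ∃ τ : ↥C →ₗ[ℝ] MvPolynomial (Fin s) ℝ,
      (∀ x, evalMap S (τ x) = ↑x) ∧ ∀ x, τ x ∈ W := by
  set e := (evalMap S).comp W.subtype with he
  have hrange : LinearMap.range e = W.map (evalMap S) := by
    rw [he, LinearMap.range_comp, Submodule.range_subtype]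
  have hC' : C ≤ LinearMap.range e := hrange ▸ hC
  obtain ⟨g, hg⟩ := e.rangeRestrict.exists_rightInverse_of_surjective
    (LinearMap.range_rangeRestrict e)
  refine ⟨W.subtype ∘ₗ g ∘ₗ Submodule.inclusion hC', fun x => ?_, fun x => by
    simp only [LinearMap.coe_comp, Function.comp_apply, Submodule.coe_subtype]
    exact SetLike.coe_mem _⟩
  have h1 : e.rangeRestrict (g (Submodule.inclusion hC' x)) = Submodule.inclusion hC' x :=
    DFunLike.congr_fun hg (Submodule.inclusion hC' x)
  have h2 : e (g (Submodule.inclusion hC' x)) = ((Submodule.inclusion hC' x : _) : ↥S → ℝ) :=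
    congrArg Subtype.val h1
  simpa [he, Submodule.coe_inclusion] using h2

/-- The degree-adapted section of the evaluation map. -/
lemma exists_section (S : Set (Fin s → ℝ)) (n : ℕ) :
    ∃ σ : ↥(F S n) →ₗ[ℝ] MvPolynomial (Fin s) ℝ,
      (∀ x, evalMap S (σ x) = ↑x) ∧
      ∀ (m : ℕ) (x : ↥(F S n)), (x : ↥S → ℝ) ∈ F S m → σ x ∈ V s m := by
  induction n with
  | zero =>
    obtain ⟨τ, hτ1, hτ2⟩ := exists_local_section S (V s 0) (F S 0) le_rfl
    exact ⟨τ, hτ1, fun m x _ => V_mono (Nat.zero_le m) (hτ2 x)⟩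
  | succ n ih =>
    obtain ⟨σn, hσ1, hσ2⟩ := ih
    have hle : F S n ≤ F S (n + 1) := F_mono S (Nat.le_succ n)
    set p' : Submodule ℝ ↥(F S (n + 1)) := (F S n).comap (F S (n + 1)).subtype with hp'
    obtain ⟨c', hc'⟩ := p'.exists_isCompl
    set Cm : Submodule ℝ (↥S → ℝ) := c'.map (F S (n + 1)).subtype with hCm
    have hCle : Cm ≤ (V s (n + 1)).map (evalMap S) := Submodule.map_subtype_le _ _
    obtain ⟨τ, hτ1, hτ2⟩ := exists_local_section S (V s (n + 1)) Cm hCle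
    set projp := p'.linearProjOfIsCompl c' hc' with hprojp
    set projc := c'.linearProjOfIsCompl p' hc'.symm with hprojc
    set eqp := Submodule.comapSubtypeEquivOfLe hle with heqp
    set eqc := Submodule.equivMapOfInjective (F S (n + 1)).subtype
      (Submodule.injective_subtype _) c' with heqc
    set σ : ↥(F S (n + 1)) →ₗ[ℝ] MvPolynomial (Fin s) ℝ :=
      (σn ∘ₗ eqp.toLinearMap ∘ₗ projp) + (τ ∘ₗ eqc.toLinearMap ∘ₗ projc) with hσ
    have happ : ∀ x : ↥(F S (n + 1)), σ x = σn (eqp (projp x)) + τ (eqc (projc x)) := by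
      intro x
      simp [hσ, LinearMap.add_apply, LinearMap.coe_comp, Function.comp_apply,
        LinearEquiv.coe_coe]
    have key : ∀ x : ↥(F S (n + 1)), evalMap S (σ x) = ↑x := by
      intro x
      have hdec : ((projp x : ↥(F S (n + 1))) + (projc x : ↥(F S (n + 1))) : ↥(F S (n + 1)))
          = x := Submodule.projection_add_projection_eq_self hc' x
      have h1 : evalMap S (σn (eqp (projp x)))
          = (((projp x : ↥(F S (n + 1))) : ↥S → ℝ)) := by
        rw [hσ1]
        exact Submodule.comapSubtypeEquivOfLe_apply_coe hle _
      have h2 : evalMap S (τ (eqc (projc x)))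
          = (((projc x : ↥(F S (n + 1))) : ↥S → ℝ)) := by
        rw [hτ1]
        exact Submodule.coe_equivMapOfInjective_apply _ _ _ _
      calc evalMap S (σ x)
          = evalMap S (σn (eqp (projp x))) + evalMap S (τ (eqc (projc x))) := by
            rw [happ x, map_add]
        _ = (((projp x : ↥(F S (n + 1))) : ↥S → ℝ))
            + (((projc x : ↥(F S (n + 1))) : ↥S → ℝ)) := by rw [h1, h2]
        _ = ↑x := by
            rw [← Submodule.coe_add]
            exact congrArg Subtype.val hdec
    refine ⟨σ, key, ?_⟩
    intro m x hxm
    rcases le_or_gt m n with hmn | hmn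
    · have hxn : (x : ↥S → ℝ) ∈ F S n := F_mono S hmn hxm
      have hxp : x ∈ p' := by
        rw [hp', Submodule.mem_comap]
        exact hxn
      have hc0 : projc x = 0 :=
        Submodule.linearProjOfIsCompl_apply_right' hc'.symm hxp
      have hpx : projp x = ⟨x, hxp⟩ :=
        Submodule.linearProjOfIsCompl_apply_left hc' ⟨x, hxp⟩
      have hsx : σ x = σn (eqp ⟨x, hxp⟩) := by
        rw [happ x, hpx, hc0]
        simp
      rw [hsx]
      refine hσ2 m (eqp ⟨x, hxp⟩) ?_
      rw [heqp, Submodule.comapSubtypeEquivOfLe_apply_coe]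
      exact hxm
    · have h1 : σn (eqp (projp x)) ∈ V s n := hσ2 n _ (SetLike.coe_mem _)
      have h2 : τ (eqc (projc x)) ∈ V s (n + 1) := hτ2 _
      have h3 : σ x ∈ V s (n + 1) := by
        rw [happ x]
        exact Submodule.add_mem _ (V_mono (Nat.le_succ n) h1) h2
      exact V_mono hmn h3

/-- Existence of a minimal degree interpolation space for a finite point set. -/
lemma exists_minDeg (S : Set (Fin s → ℝ)) [Fintype ↥S] :
    ∃ L, IsMinDegInterpSpace S L := by
  obtain ⟨σ, hσ1, hσ2⟩ := exists_section S (Fintype.card ↥S)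
  have hFtop := F_top S
  have hmem : ∀ f : MvPolynomial (Fin s) ℝ, evalMap S f ∈ F S (Fintype.card ↥S) := by
    intro f
    rw [hFtop]
    exact Submodule.mem_top
  have hcoe : ∀ (g : MvPolynomial (Fin s) ℝ) (x : ↥(F S (Fintype.card ↥S))),
      (∀ z ∈ S, MvPolynomial.eval z (σ x) = MvPolynomial.eval z g) →
      (x : ↥S → ℝ) = evalMap S g := by
    intro g x hev
    rw [← hσ1 x]
    funext z
    rw [evalMap_apply, evalMap_apply]
    exact hev z z.2
  refine ⟨LinearMap.range σ, ⟨?_, ?_⟩⟩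
  · intro f
    refine ⟨σ ⟨evalMap S f, hmem f⟩, ⟨⟨_, rfl⟩, ?_⟩, ?_⟩
    · intro z hz
      have h := congrFun (hσ1 ⟨evalMap S f, hmem f⟩) ⟨z, hz⟩
      rw [evalMap_apply] at h
      rw [h]
      exact (evalMap_apply S f ⟨z, hz⟩)
    · rintro g' ⟨⟨x', rfl⟩, hev⟩
      have hx' : x' = ⟨evalMap S f, hmem f⟩ := Subtype.ext (hcoe f x' hev)
      rw [hx']
  · intro f g hg hev
    obtain ⟨x, rfl⟩ := hg
    have hx : (x : ↥S → ℝ) = evalMap S f := hcoe f x hev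
    have hf : evalMap S f ∈ F S f.totalDegree :=
      ⟨f, (MvPolynomial.mem_restrictTotalDegree _ _ _).mpr le_rfl, rfl⟩
    have h := hσ2 f.totalDegree x (by rw [hx]; exact hf)
    exact (MvPolynomial.mem_restrictTotalDegree _ _ _).mp h

/-- Any member of a minimal degree interpolation space has degree at most `card S`. -/
lemma deg_le (S : Set (Fin s → ℝ)) [Fintype ↥S]
    {L : Submodule ℝ (MvPolynomial (Fin s) ℝ)} (hL : IsMinDegInterpSpace S L)
    {p : MvPolynomial (Fin s) ℝ} (hp : p ∈ L) :
    p.totalDegree ≤ Fintype.card ↥S := by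
  obtain ⟨q, hdq, hq⟩ := exists_eval_eq S (fun z => MvPolynomial.eval (z : Fin s → ℝ) p)
  refine (hL.2 q p hp ?_).trans hdq
  intro z hz
  exact (hq ⟨z, hz⟩).symm

end MuMono

/-- **Monotonicity of the minimal interpolation degree.** -/
theorem mu_mono {s : ℕ} (S' S : Set (Fin s → ℝ)) (hS : S.Finite) (hsub : S' ⊆ S) :
    mu S' ≤ mu S := by
  haveI : Fintype ↥S := hS.fintype
  obtain ⟨L, hL⟩ := MuMono.exists_minDeg S
  have hBL : BddAbove (MvPolynomial.totalDegree '' (L : Set (MvPolynomial (Fin s) ℝ))) := by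
    refine ⟨Fintype.card ↥S, ?_⟩
    rintro _ ⟨p, hp, rfl⟩
    exact MuMono.deg_le S hL hp
  have hBmu : BddAbove (degSup '' {M | IsMinDegInterpSpace S M}) := by
    refine ⟨Fintype.card ↥S, ?_⟩
    rintro _ ⟨M, hM, rfl⟩
    refine csSup_le' ?_
    rintro _ ⟨p, hp, rfl⟩
    exact MuMono.deg_le S hM hp
  have key : ∀ x ∈ degSup '' {M | IsMinDegInterpSpace S' M}, x ≤ mu S := by
    rintro _ ⟨M', hM', rfl⟩
    refine csSup_le' ?_
    rintro _ ⟨g, hg, rfl⟩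
    obtain ⟨h, ⟨hhL, hhev⟩, -⟩ := hL.1 g
    have h1 : g.totalDegree ≤ h.totalDegree :=
      hM'.2 h g hg fun z hz => (hhev z (hsub hz)).symm
    have h2 : h.totalDegree ≤ degSup L := le_csSup hBL ⟨h, hhL, rfl⟩
    have h3 : degSup L ≤ mu S := le_csSup hBmu ⟨L, hL, rfl⟩
    omega
  exact csSup_le' key
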